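/- Let I ⊆ k[x_0, x_1, y] be a monomial ideal such that for some integer i ≥ 0, I contains all monomials x_0^{i-t} x_1^{t} for t = 0, ..., i. Then the number of monomials of degree i+1 in I is at least i + 2 more than the number of monomials of degree i in I, i.e., dim_k I^{(i+1)} ≥ dim_k I^{(i)} + i + 2. -/

import Mathlib

/-- The degree-`l` graded piece of an ideal of `k[x₀, x₁, y]`, as a `k`-subspace. -/
noncomputable def gradedPiece3 (k : Type) [Field k]
    (I : Ideal (MvPolynomial (Fin 3) k)) (l : ℕ) :
    Submodule k (MvPolynomial (Fin 3) k) :=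
  I.restrictScalars k ⊓ MvPolynomial.homogeneousSubmodule (Fin 3) k l

private lemma degree_aux_stmt12 (d : Fin 3 →₀ ℕ) : d.degree = d 0 + d 1 + d 2 := by
  rw [Finsupp.degree_apply, Finset.sum_subset (Finset.subset_univ d.support)]
  · rw [Fin.sum_univ_three]
  · intro x _ hx
    simpa using Finsupp.notMem_support_iff.mp hx

open MvPolynomial Module Submodule in
/-- If a monomial ideal `I ⊆ k[x₀, x₁, y]` contains all monomials `x₀^{i-t} x₁^t`
for `t = 0, …, i`, then `dim_k I^{(i+1)} ≥ dim_k I^{(i)} + i + 2`. -/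
theorem stmt_12 (k : Type) [Field k] (I : Ideal (MvPolynomial (Fin 3) k))
    (hmono : ∀ p ∈ I, ∀ m ∈ p.support, MvPolynomial.monomial m (1 : k) ∈ I)
    (i : ℕ)
    (hrow : ∀ t : ℕ, t ≤ i →
      MvPolynomial.monomial (Finsupp.single (0 : Fin 3) (i - t) +
        Finsupp.single (1 : Fin 3) t) (1 : k) ∈ I) :
    Module.finrank k (gradedPiece3 k I i) + i + 2 ≤
      Module.finrank k (gradedPiece3 k I (i + 1)) := by
  classical
  -- graded pieces are finite dimensional
  have hfd : ∀ l : ℕ, FiniteDimensional k (gradedPiece3 k I l) := by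
    intro l
    refine Submodule.finiteDimensional_of_le
      (S₂ := MvPolynomial.restrictTotalDegree (Fin 3) k l) ?_
    intro p hp
    rw [MvPolynomial.mem_restrictTotalDegree]
    exact ((MvPolynomial.mem_homogeneousSubmodule _ _).mp hp.2).totalDegree_le
  haveI := hfd i
  haveI := hfd (i + 1)
  -- multiplication by y = X 2
  set f : MvPolynomial (Fin 3) k →ₗ[k] MvPolynomial (Fin 3) k :=
    LinearMap.mulLeft k (X 2) with hfdef
  have hf : Function.Injective f :=
    fun a b h => mul_left_cancel₀ (X_ne_zero (2 : Fin 3)) h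
  -- the extra monomials
  set e : Fin (i + 2) → (Fin 3 →₀ ℕ) := fun t =>
    Finsupp.single (0 : Fin 3) (i + 1 - (t : ℕ)) + Finsupp.single (1 : Fin 3) (t : ℕ)
    with hedef
  set b : Fin (i + 2) → MvPolynomial (Fin 3) k := fun t => monomial (e t) 1 with hbdef
  have he2 : ∀ t, e t 2 = 0 := by
    intro t
    simp [hedef, Finsupp.single_apply]
  have he : Function.Injective e := by
    intro s t h
    have h1 := congrArg (fun m : Fin 3 →₀ ℕ => m 1) h
    simp only [hedef, Finsupp.add_apply, Finsupp.single_apply] at h1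
    norm_num at h1
    exact Fin.ext h1
  have hb : LinearIndependent k b := by
    have h1 := (MvPolynomial.basisMonomials (Fin 3) k).linearIndependent.comp e he
    have h2 : b = (MvPolynomial.basisMonomials (Fin 3) k) ∘ e := by
      funext t
      simp [hbdef, MvPolynomial.coe_basisMonomials]
    rwa [h2]
  -- the extra monomials lie in the degree (i+1) piece
  have hbmem : ∀ t : Fin (i + 2), b t ∈ gradedPiece3 k I (i + 1) := by
    intro t
    constructor
    · -- membership in I
      show b t ∈ I
      rcases le_or_gt (t : ℕ) i with ht | ht
      · have hexp : e t = Finsupp.single (0 : Fin 3) 1 +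
            (Finsupp.single (0 : Fin 3) (i - (t : ℕ)) +
              Finsupp.single (1 : Fin 3) (t : ℕ)) := by
          ext j
          fin_cases j <;> simp [hedef, Finsupp.single_apply] <;> omega
        show monomial (e t) (1 : k) ∈ I
        rw [hexp, monomial_single_add, pow_one]
        exact I.mul_mem_left _ (hrow _ ht)
      · have ht' : (t : ℕ) = i + 1 := by omega
        have hexp : e t = Finsupp.single (1 : Fin 3) 1 +
            (Finsupp.single (0 : Fin 3) (i - i) + Finsupp.single (1 : Fin 3) i) := by
          ext j
          fin_cases j <;> simp [hedef, ht', Finsupp.single_apply] <;> omega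
        show monomial (e t) (1 : k) ∈ I
        rw [hexp, monomial_single_add, pow_one]
        exact I.mul_mem_left _ (hrow i le_rfl)
    · -- homogeneous of degree i + 1
      rw [SetLike.mem_coe, MvPolynomial.mem_homogeneousSubmodule]
      refine isHomogeneous_monomial _ ?_
      have htlt : (t : ℕ) < i + 2 := t.isLt
      have h0 : e t 0 = i + 1 - (t : ℕ) := by simp [hedef, Finsupp.single_apply]
      have h1 : e t 1 = (t : ℕ) := by simp [hedef, Finsupp.single_apply]
      rw [degree_aux_stmt12, h0, h1, he2 t]
      omega
  -- the image of the degree-i piece under f lies in the degree (i+1) piece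
  have hmap : (gradedPiece3 k I i).map f ≤ gradedPiece3 k I (i + 1) := by
    rintro _ ⟨p, hp, rfl⟩
    have hfp : f p = X 2 * p := rfl
    constructor
    · show f p ∈ I
      rw [hfp]
      exact I.mul_mem_left _ hp.1
    · rw [SetLike.mem_coe, MvPolynomial.mem_homogeneousSubmodule, hfp]
      have h1 : (X 2 : MvPolynomial (Fin 3) k).IsHomogeneous 1 := isHomogeneous_X _ _
      have h2 := h1.mul ((MvPolynomial.mem_homogeneousSubmodule _ _).mp hp.2)
      rwa [add_comm] at h2
  have hspan : span k (Set.range b) ≤ gradedPiece3 k I (i + 1) := by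
    rw [span_le]
    rintro _ ⟨t, rfl⟩
    exact hbmem t
  -- disjointness
  have hdisj : Disjoint ((gradedPiece3 k I i).map f) (span k (Set.range b)) := by
    rw [Submodule.disjoint_def]
    intro p hp1 hp2
    obtain ⟨q, _, rfl⟩ := hp1
    -- coefficients at monomials not divisible by y vanish
    have hA : ∀ m : Fin 3 →₀ ℕ, m 2 = 0 → coeff m (f q) = 0 := by
      intro m hm
      have hfq : f q = q * X 2 := mul_comm _ _
      rw [hfq, coeff_mul_X', if_neg]
      simp [Finsupp.mem_support_iff, hm]
    -- coefficients at monomials divisible by y vanish, via span membership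
    have hB : ∀ m : Fin 3 →₀ ℕ, m 2 ≠ 0 → coeff m (f q) = 0 := by
      intro m hm
      have hW : span k (Set.range b) ≤ LinearMap.ker (lcoeff k m) := by
        rw [span_le]
        rintro _ ⟨t, rfl⟩
        rw [SetLike.mem_coe, LinearMap.mem_ker, lcoeff_apply, hbdef]
        rw [coeff_monomial, if_neg]
        intro hc
        exact hm (hc ▸ he2 t)
      simpa using hW hp2
    ext m
    rcases eq_or_ne (m 2) 0 with hm | hm
    · simpa using hA m hm
    · simpa using hB m hm
  -- finite dimensionality of the two pieces
  haveI : FiniteDimensional k ((gradedPiece3 k I i).map f) :=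
    Submodule.finiteDimensional_of_le hmap
  haveI : FiniteDimensional k (span k (Set.range b)) :=
    Submodule.finiteDimensional_of_le hspan
  -- rank computations
  have h1 : finrank k ((gradedPiece3 k I i).map f) = finrank k (gradedPiece3 k I i) :=
    ((Submodule.equivMapOfInjective f hf _).finrank_eq).symm
  have h2 : finrank k (span k (Set.range b)) = i + 2 := by
    rw [finrank_span_eq_card hb, Fintype.card_fin]
  have h3 := Submodule.finrank_sup_add_finrank_inf_eq
    ((gradedPiece3 k I i).map f) (span k (Set.range b))
  rw [hdisj.eq_bot, finrank_bot, add_zero] at h3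
  calc finrank k (gradedPiece3 k I i) + i + 2
      = finrank k ((gradedPiece3 k I i).map f) + finrank k (span k (Set.range b)) := by
        rw [h1, h2]; ring
    _ = finrank k ((gradedPiece3 k I i).map f ⊔ span k (Set.range b) :
          Submodule k (MvPolynomial (Fin 3) k)) := h3.symm
    _ ≤ finrank k (gradedPiece3 k I (i + 1)) :=
        Submodule.finrank_mono (sup_le hmap hspan)
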